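/- Let F₁,…,Fₙ : [0,1] → [0,1] be continuous, strictly increasing, with Fᵢ(0)=0 and Fᵢ(1)=1. Suppose there exist distinct agents i, j and t ∈ {1,…,n−1} such that the t/n-mark of agent i differs from the t/n-mark of agent j. Then there exists a connected strongly-proportional allocation: cut points 0 = x₀ ≤ ⋯ ≤ xₙ = 1 and a bijection σ such that F_{σ(k)}(x_k) − F_{σ(k)}(x_{k−1}) > 1/n for every k ∈ {1,…,n}. -/

import Mathlib

open Set

namespace SPAux

variable {n : ℕ}

structure Hyp (n : ℕ) (F M : Fin n → ℝ → ℝ) : Prop where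
  f0 : ∀ i, F i 0 = 0
  f1 : ∀ i, F i 1 = 1
  mono : ∀ i, StrictMonoOn (F i) (Icc 0 1)
  mark_mem : ∀ i r, r ∈ Icc (0:ℝ) 1 → M i r ∈ Icc (0:ℝ) 1
  f_mark : ∀ i r, r ∈ Icc (0:ℝ) 1 → F i (M i r) = r

variable {F M : Fin n → ℝ → ℝ}

lemma Hyp.F_mem (h : Hyp n F M) (i : Fin n) {y : ℝ} (hy : y ∈ Icc (0:ℝ) 1) :
    F i y ∈ Icc (0:ℝ) 1 := by
  constructor
  · have := (h.mono i).monotoneOn (left_mem_Icc.2 zero_le_one) hy hy.1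
    rwa [h.f0] at this
  · have := (h.mono i).monotoneOn hy (right_mem_Icc.2 zero_le_one) hy.2
    rwa [h.f1] at this

lemma Hyp.lt_of_lt_mark (h : Hyp n F M) (i : Fin n) {y r : ℝ} (hy : y ∈ Icc (0:ℝ) 1)
    (hr : r ∈ Icc (0:ℝ) 1) (hlt : y < M i r) : F i y < r := by
  have := h.mono i hy (h.mark_mem i r hr) hlt
  rwa [h.f_mark i r hr] at this

lemma Hyp.gt_of_gt_mark (h : Hyp n F M) (i : Fin n) {y r : ℝ} (hy : y ∈ Icc (0:ℝ) 1)
    (hr : r ∈ Icc (0:ℝ) 1) (hlt : M i r < y) : r < F i y := by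
  have := h.mono i (h.mark_mem i r hr) hy hlt
  rwa [h.f_mark i r hr] at this

lemma Hyp.mark_lt_mark (h : Hyp n F M) (i : Fin n) {r r' : ℝ} (hr : r ∈ Icc (0:ℝ) 1)
    (hr' : r' ∈ Icc (0:ℝ) 1) (hlt : r < r') : M i r < M i r' := by
  by_contra hc
  push_neg at hc
  have := (h.mono i).monotoneOn (h.mark_mem i r' hr') (h.mark_mem i r hr) hc
  rw [h.f_mark i r hr, h.f_mark i r' hr'] at this
  exact absurd (lt_of_lt_of_le hlt this) (lt_irrefl r)

lemma Hyp.lt_mark_of_lt (h : Hyp n F M) (i : Fin n) {y r : ℝ} (hy : y ∈ Icc (0:ℝ) 1)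
    (hr : r ∈ Icc (0:ℝ) 1) (hlt : F i y < r) : y < M i r := by
  by_contra hc
  push_neg at hc
  have := (h.mono i).monotoneOn (h.mark_mem i r hr) hy hc
  rw [h.f_mark i r hr] at this
  exact absurd (lt_of_lt_of_le hlt this) (lt_irrefl _)

lemma Hyp.mark_lt_of_lt (h : Hyp n F M) (i : Fin n) {y r : ℝ} (hy : y ∈ Icc (0:ℝ) 1)
    (hr : r ∈ Icc (0:ℝ) 1) (hlt : r < F i y) : M i r < y := by
  by_contra hc
  push_neg at hc
  have := (h.mono i).monotoneOn hy (h.mark_mem i r hr) hc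
  rw [h.f_mark i r hr] at this
  exact absurd (lt_of_lt_of_le hlt this) (lt_irrefl _)

lemma rightBuild (h : Hyp n F M) :
    ∀ (m : ℕ), 1 ≤ m → ∀ (ℓ : ℕ), ℓ + m = n → ∀ (a : ℕ → Fin n) (y : ℝ),
    y ∈ Icc (0:ℝ) 1 →
    F (a 0) y < (ℓ : ℝ) / n →
    (∀ p, p + 1 < m → M (a p) (((ℓ + p + 1 : ℕ) : ℝ) / n) ≤ M (a (p+1)) (((ℓ + p + 1 : ℕ) : ℝ) / n)) →
    ∃ x : ℕ → ℝ, x 0 = y ∧ x m = 1 ∧ (∀ p, p < m → x p ≤ x (p+1)) ∧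
      (∀ p, p ≤ m → x p ∈ Icc (0:ℝ) 1) ∧
      (∀ p, p < m → 1 / (n:ℝ) < F (a p) (x (p+1)) - F (a p) (x p)) := by
  intro m
  induction m with
  | zero => omega
  | succ m ih =>
    intro _ ℓ hℓ a y hy h1 hchain
    have hn0 : 0 < n := by omega
    have hnR : (0:ℝ) < n := by exact_mod_cast hn0
    rcases Nat.eq_zero_or_pos m with hm0 | hm1
    · -- base case : m = 0, single agent
      subst hm0
      refine ⟨fun p => if p = 0 then y else 1, by simp, by simp, ?_, ?_, ?_⟩
      · intro p hp
        interval_cases p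
        simp [hy.2]
      · intro p hp
        rcases Nat.eq_zero_or_pos p with rfl | hp1
        · simpa using hy
        · simp [Nat.pos_iff_ne_zero.mp hp1]
      · intro p hp
        interval_cases p
        norm_num
        rw [h.f1]
        have hℓR : (ℓ : ℝ) = n - 1 := by
          have : (ℓ : ℝ) + 1 = n := by exact_mod_cast hℓ
          linarith
        rw [hℓR] at h1
        have : F (a 0) y < 1 - 1/n := by
          rw [sub_div, div_self (ne_of_gt hnR)] at h1
          exact h1
        simp only [one_div] at this ⊢
        linarith
    · -- inductive step
      have hℓ1 : ℓ + 1 ≤ n := by omega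
      have hr1mem : ((ℓ + 1 : ℕ) : ℝ) / n ∈ Icc (0:ℝ) 1 := by
        constructor
        · positivity
        · rw [div_le_one hnR]; exact_mod_cast hℓ1
      have hFy0 : 0 ≤ F (a 0) y := (h.F_mem (a 0) hy).1
      have hval_mem : F (a 0) y + 1/n ∈ Icc (0:ℝ) 1 := by
        constructor
        · positivity
        · have : F (a 0) y + 1/n < ((ℓ+1 : ℕ) : ℝ)/n := by
            push_cast
            rw [add_div]
            linarith
          linarith [hr1mem.2]
      have hvlt : F (a 0) y + 1/n < ((ℓ+1 : ℕ) : ℝ)/n := by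
        push_cast
        rw [add_div]
        linarith
      set z := M (a 0) (F (a 0) y + 1/n) with hz
      have hzmem : z ∈ Icc (0:ℝ) 1 := h.mark_mem _ _ hval_mem
      have hzlt : z < M (a 0) (((ℓ+1 : ℕ) : ℝ)/n) := h.mark_lt_mark _ hval_mem hr1mem hvlt
      have hyz : y < z := by
        refine h.lt_mark_of_lt _ hy hval_mem ?_
        have : 0 < 1/(n:ℝ) := by positivity
        linarith
      set x1 := (z + M (a 0) (((ℓ+1 : ℕ) : ℝ)/n)) / 2 with hx1
      have hx1a : z < x1 := by
        rw [hx1]; linarith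
      have hx1b : x1 < M (a 0) (((ℓ+1 : ℕ) : ℝ)/n) := by
        rw [hx1]; linarith
      have hMmem := h.mark_mem (a 0) _ hr1mem
      have hx1mem : x1 ∈ Icc (0:ℝ) 1 := by
        constructor
        · linarith [hzmem.1]
        · linarith [hMmem.2]
      have hchain0 : M (a 0) (((ℓ + 1 : ℕ) : ℝ)/n) ≤ M (a 1) (((ℓ + 1 : ℕ) : ℝ)/n) := by
        have := hchain 0 (by omega)
        simpa using this
      have hx1lt : x1 < M (a 1) (((ℓ + 1 : ℕ) : ℝ)/n) := lt_of_lt_of_le hx1b hchain0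
      have hF1x1 : F (a 1) x1 < ((ℓ + 1 : ℕ) : ℝ)/n := h.lt_of_lt_mark _ hx1mem hr1mem hx1lt
      have hpiece0 : 1/(n:ℝ) < F (a 0) x1 - F (a 0) y := by
        have : F (a 0) z < F (a 0) x1 := h.mono _ hzmem hx1mem hx1a
        rw [h.f_mark _ _ hval_mem] at this
        linarith
      obtain ⟨x', hx'0, hx'm, hx'mono, hx'mem, hx'piece⟩ :=
        ih hm1 (ℓ+1) (by omega) (fun p => a (p+1)) x1 hx1mem hF1x1
          (by
            intro p hp
            have := hchain (p+1) (by omega)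
            have harith : ℓ + (p+1) + 1 = ℓ + 1 + p + 1 := by omega
            rw [harith] at this
            exact this)
      refine ⟨fun p => Nat.casesOn p y (fun q => x' q), rfl, hx'm, ?_, ?_, ?_⟩
      · intro p hp
        cases p with
        | zero => simpa [hx'0] using le_of_lt (lt_trans hyz hx1a)
        | succ q => exact hx'mono q (by omega)
      · intro p hp
        cases p with
        | zero => exact hy
        | succ q => exact hx'mem q (by omega)
      · intro p hp
        cases p with
        | zero => simpa [hx'0] using hpiece0
        | succ q => exact hx'piece q (by omega)


lemma leftBuild (h : Hyp n F M) :
    ∀ (t : ℕ), 1 ≤ t → t ≤ n → ∀ (b : ℕ → Fin n) (y : ℝ), y ∈ Icc (0:ℝ) 1 →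
    ((t : ℕ) : ℝ) / n < F (b (t-1)) y →
    (∀ p, p + 1 < t → M (b p) (((p + 1 : ℕ) : ℝ) / n) ≤ M (b (p+1)) (((p + 1 : ℕ) : ℝ) / n)) →
    ∃ x : ℕ → ℝ, x 0 = 0 ∧ x t = y ∧ (∀ p, p < t → x p ≤ x (p+1)) ∧
      (∀ p, p ≤ t → x p ∈ Icc (0:ℝ) 1) ∧
      (∀ p, p < t → 1 / (n:ℝ) < F (b p) (x (p+1)) - F (b p) (x p)) := by
  intro t
  induction t with
  | zero => omega
  | succ t ih =>
    intro _ htn b y hy hlast hchain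
    have hn0 : 0 < n := by omega
    have hnR : (0:ℝ) < n := by exact_mod_cast hn0
    rcases Nat.eq_zero_or_pos t with hm0 | hm1
    · subst hm0
      refine ⟨fun p => if p = 0 then 0 else y, by simp, by simp, ?_, ?_, ?_⟩
      · intro p hp
        interval_cases p
        simpa using hy.1
      · intro p hp
        rcases Nat.eq_zero_or_pos p with rfl | hp1
        · simp
        · simpa [Nat.pos_iff_ne_zero.mp hp1] using hy
      · intro p hp
        interval_cases p
        norm_num
        rw [h.f0]
        simpa using hlast
    · -- step
      have hlast' : ((t + 1 : ℕ) : ℝ) / n < F (b t) y := by simpa using hlast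
      have hrT : ((t : ℕ) : ℝ) / n ∈ Icc (0:ℝ) 1 := by
        constructor
        · positivity
        · rw [div_le_one hnR]
          exact_mod_cast (by omega : t ≤ n)
      have hFy1 : F (b t) y ≤ 1 := (h.F_mem (b t) hy).2
      have hinv : (0:ℝ) < 1/n := by positivity
      have hvgt : ((t : ℕ) : ℝ) / n < F (b t) y - 1/n := by
        have : ((t+1 : ℕ) : ℝ)/n = (t : ℝ)/n + 1/n := by
          push_cast
          ring
        rw [this] at hlast'
        linarith
      have hval_mem : F (b t) y - 1/n ∈ Icc (0:ℝ) 1 := by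
        constructor
        · have := hrT.1
          linarith
        · linarith
      set w := M (b t) (F (b t) y - 1/n) with hw
      have hwmem : w ∈ Icc (0:ℝ) 1 := h.mark_mem _ _ hval_mem
      have hwgt : M (b t) (((t : ℕ) : ℝ)/n) < w := h.mark_lt_mark _ hrT hval_mem hvgt
      have hchainT : M (b (t-1)) (((t : ℕ) : ℝ)/n) ≤ M (b t) (((t : ℕ) : ℝ)/n) := by
        have := hchain (t-1) (by omega)
        have harith : t - 1 + 1 = t := by omega
        rw [harith] at this
        exact this
      have hwy : w < y := by
        refine h.mark_lt_of_lt _ hy hval_mem ?_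
        linarith
      set xt := (M (b (t-1)) (((t : ℕ) : ℝ)/n) + w) / 2 with hxt
      have hxta : M (b (t-1)) (((t : ℕ) : ℝ)/n) < xt := by
        rw [hxt]
        have := lt_of_le_of_lt hchainT hwgt
        linarith
      have hxtb : xt < w := by
        rw [hxt]
        have := lt_of_le_of_lt hchainT hwgt
        linarith
      have hMTmem := h.mark_mem (b (t-1)) _ hrT
      have hxtmem : xt ∈ Icc (0:ℝ) 1 := by
        constructor
        · linarith [hMTmem.1]
        · linarith [hwmem.2]
      have hpieceT : 1/(n:ℝ) < F (b t) y - F (b t) xt := by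
        have : F (b t) xt < F (b t) w := h.mono _ hxtmem hwmem hxtb
        rw [h.f_mark _ _ hval_mem] at this
        linarith
      have hlastT : ((t : ℕ) : ℝ)/n < F (b (t-1)) xt :=
        h.gt_of_gt_mark _ hxtmem hrT hxta
      obtain ⟨x', hx'0, hx't, hx'mono, hx'mem, hx'piece⟩ :=
        ih hm1 (by omega) b xt hxtmem hlastT (fun p hp => hchain p (by omega))
      refine ⟨fun p => if p = t + 1 then y else x' p, ?_, by simp, ?_, ?_, ?_⟩
      · simp [hx'0]
      · intro p hp
        rcases Nat.lt_or_ge p t with hpt | hpt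
        · have h1 : p ≠ t + 1 := by omega
          have h2 : p + 1 ≠ t + 1 := by omega
          simp only [if_neg h1, if_neg h2]
          exact hx'mono p hpt
        · have hpt' : p = t := by omega
          subst hpt'
          have h1 : p ≠ p + 1 := by omega
          simp only [if_neg h1, if_pos rfl, if_true, eq_self_iff_true, hx't]
          linarith
      · intro p hp
        rcases Nat.lt_or_ge p (t+1) with hpt | hpt
        · have h1 : p ≠ t + 1 := by omega
          simp only [if_neg h1]
          exact hx'mem p (by omega)
        · have hpt' : p = t + 1 := by omega
          subst hpt'
          simp only [if_pos rfl]
          exact hy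
      · intro p hp
        rcases Nat.lt_or_ge p t with hpt | hpt
        · have h1 : p ≠ t + 1 := by omega
          have h2 : p + 1 ≠ t + 1 := by omega
          simp only [if_neg h1, if_neg h2]
          exact hx'piece p hpt
        · have hpt' : p = t := by omega
          subst hpt'
          have h1 : p ≠ p + 1 := by omega
          simp only [if_neg h1, if_pos rfl, if_true, eq_self_iff_true, hx't]
          exact hpieceT

section Comb

variable (G : Fin n → ℕ → ℝ)

lemma consStep {m : ℕ} {S : Finset (Fin n)} (j : Fin n) (hj : j ∈ S)
    (hmn : m + 1 ≤ n)
    (f' : ℕ → Fin n)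
    (hmem : ∀ p, p < m → f' p ∈ S.erase j)
    (hinj : ∀ p q, p < m → q < m → f' p = f' q → p = q)
    (hchain : ∀ p, p + 1 < m → G (f' p) (n - m + p + 1) ≤ G (f' (p+1)) (n - m + p + 1))
    (hstrict : ∃ p, p + 1 < m ∧ G (f' p) (n - m + p + 1) < G (f' (p+1)) (n - m + p + 1))
    (hle : G j (n - m) ≤ G (f' 0) (n - m)) :
    ∃ f : ℕ → Fin n, (∀ p, p < m + 1 → f p ∈ S) ∧
      (∀ p q, p < m + 1 → q < m + 1 → f p = f q → p = q) ∧
      (∀ p, p + 1 < m + 1 → G (f p) (n - (m+1) + p + 1) ≤ G (f (p+1)) (n - (m+1) + p + 1)) ∧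
      (∃ p, p + 1 < m + 1 ∧ G (f p) (n - (m+1) + p + 1) < G (f (p+1)) (n - (m+1) + p + 1)) := by
  refine ⟨fun p => Nat.casesOn p j (fun q => f' q), ?_, ?_, ?_, ?_⟩
  · intro p hp
    cases p with
    | zero => exact hj
    | succ q => exact Finset.mem_of_mem_erase (hmem q (by omega))
  · intro p q hp hq hpq
    cases p with
    | zero =>
      cases q with
      | zero => rfl
      | succ q' =>
        exfalso
        exact (Finset.ne_of_mem_erase (hmem q' (by omega))) hpq.symm
    | succ p' =>
      cases q with
      | zero =>
        exfalso
        exact (Finset.ne_of_mem_erase (hmem p' (by omega))) hpq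
      | succ q' => exact congrArg Nat.succ (hinj p' q' (by omega) (by omega) hpq)
  · intro p hp
    cases p with
    | zero =>
      have e : n - (m+1) + 0 + 1 = n - m := by omega
      rw [e]
      exact hle
    | succ q =>
      have e : n - (m+1) + (q+1) + 1 = n - m + q + 1 := by omega
      rw [e]
      exact hchain q (by omega)
  · obtain ⟨p, hp, hs⟩ := hstrict
    refine ⟨p + 1, by omega, ?_⟩
    have e : n - (m+1) + (p+1) + 1 = n - m + p + 1 := by omega
    rw [e]
    exact hs

lemma claimB : ∀ (m : ℕ), 2 ≤ m → ∀ S : Finset (Fin n), S.card = m →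
    (∃ k : ℕ, n - m + 1 ≤ k ∧ k ≤ n - 1 ∧ ∃ u ∈ S, ∃ v ∈ S, G u k ≠ G v k) →
    ∃ f : ℕ → Fin n, (∀ p, p < m → f p ∈ S) ∧
      (∀ p q, p < m → q < m → f p = f q → p = q) ∧
      (∀ p, p + 1 < m → G (f p) (n - m + p + 1) ≤ G (f (p+1)) (n - m + p + 1)) ∧
      (∃ p, p + 1 < m ∧ G (f p) (n - m + p + 1) < G (f (p+1)) (n - m + p + 1)) := by
  intro m
  induction m with
  | zero => omega
  | succ m ih =>
    intro hm2 S hcard hdiff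
    have hmn : m + 1 ≤ n := by
      have := Finset.card_le_univ S
      simp only [Finset.card_univ, Fintype.card_fin] at this
      omega
    by_cases hA : ∃ u ∈ S, ∃ v ∈ S, G u (n - m) ≠ G v (n - m)
    · have hSne : S.Nonempty := Finset.card_pos.1 (by omega)
      obtain ⟨w, hwS, hwmin⟩ := S.exists_min_image (fun u => G u (n - m)) hSne
      by_cases hD : ∃ k, n - m + 1 ≤ k ∧ k ≤ n - 1 ∧
          ∃ u ∈ S.erase w, ∃ v ∈ S.erase w, G u k ≠ G v k
      · obtain ⟨k, hk1, hk2, u, hu, v, hv, huv⟩ := hD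
        have huvne : u ≠ v := fun e => huv (by rw [e])
        have hm2' : 2 ≤ m := by
          have : 1 < (S.erase w).card := Finset.one_lt_card.2 ⟨u, hu, v, hv, huvne⟩
          rw [Finset.card_erase_of_mem hwS, hcard] at this
          omega
        obtain ⟨f', hmem', hinj', hchain', hstrict'⟩ :=
          ih hm2' (S.erase w) (by rw [Finset.card_erase_of_mem hwS, hcard]; omega)
            ⟨k, hk1, hk2, u, hu, v, hv, huv⟩
        exact consStep G w hwS hmn f' hmem' hinj' hchain' hstrict'
          (hwmin _ (Finset.mem_of_mem_erase (hmem' 0 (by omega))))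
      · push_neg at hD
        obtain ⟨u, hu, v, hv, huv⟩ := hA
        have hv' : ∃ v' ∈ S, G w (n - m) < G v' (n - m) := by
          rcases huv.lt_or_gt with hc | hc
          · exact ⟨v, hv, lt_of_le_of_lt (hwmin u hu) hc⟩
          · exact ⟨u, hu, lt_of_le_of_lt (hwmin v hv) hc⟩
        obtain ⟨v', hv'S, hlt⟩ := hv'
        have hv'w : v' ≠ w := by
          intro e
          rw [e] at hlt
          exact lt_irrefl _ hlt
        set R := (S.erase w).erase v' with hR
        set l := R.toList with hl
        have hv'mem : v' ∈ S.erase w := Finset.mem_erase.2 ⟨hv'w, hv'S⟩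
        have hRcard : R.card = m - 1 := by
          rw [hR, Finset.card_erase_of_mem hv'mem, Finset.card_erase_of_mem hwS, hcard]
          omega
        have hlen : l.length = m - 1 := by rw [hl, Finset.length_toList, hRcard]
        have hm1 : 1 ≤ m := by omega
        have hgetR : ∀ q, q < m - 1 → l.getD q w ∈ R := by
          intro q hq
          rw [List.getD_eq_getElem l w (by omega : q < l.length)]
          exact Finset.mem_toList.1 (List.getElem_mem _)
        refine ⟨fun p => Nat.casesOn p w (fun p1 => Nat.casesOn p1 v' (fun q => l.getD q w)),
          ?_, ?_, ?_, ?_⟩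
        · intro p hp
          rcases p with _ | _ | q
          · exact hwS
          · exact hv'S
          · have : l.getD q w ∈ R := hgetR q (by omega)
            rw [hR] at this
            exact Finset.mem_of_mem_erase (Finset.mem_of_mem_erase this)
        · have hnw : ∀ q, q < m - 1 → l.getD q w ≠ w := by
            intro q hq
            have := hgetR q hq
            rw [hR] at this
            exact Finset.ne_of_mem_erase (Finset.mem_of_mem_erase this)
          have hnv : ∀ q, q < m - 1 → l.getD q w ≠ v' := by
            intro q hq
            have := hgetR q hq
            rw [hR] at this
            exact Finset.ne_of_mem_erase this
          intro p q hp hq hpq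
          rcases p with _ | _ | p' <;> rcases q with _ | _ | q'
          · rfl
          · exact absurd hpq.symm hv'w
          · exact absurd hpq.symm (hnw q' (by omega))
          · exact absurd hpq hv'w
          · rfl
          · exact absurd hpq.symm (hnv q' (by omega))
          · exact absurd hpq (hnw p' (by omega))
          · exact absurd hpq (hnv p' (by omega))
          · have h1 : p' < l.length := by omega
            have h2 : q' < l.length := by omega
            have hpq' : l.getD p' w = l.getD q' w := hpq
            rw [List.getD_eq_getElem l w h1, List.getD_eq_getElem l w h2] at hpq'
            have := ((Finset.nodup_toList R).getElem_inj_iff).1 hpq'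
            omega
        · intro p hp
          rcases p with _ | _ | q
          · have e : n - (m+1) + 0 + 1 = n - m := by omega
            rw [e]
            exact le_of_lt hlt
          · have hm2'' : 2 ≤ m := by omega
            have e : n - (m+1) + 1 + 1 = n - m + 1 := by omega
            rw [e]
            have hmem0 : l.getD 0 w ∈ S.erase w := by
              have := hgetR 0 (by omega)
              rw [hR] at this
              exact Finset.mem_of_mem_erase this
            exact le_of_eq (hD (n - m + 1) (le_refl _) (by omega) v' hv'mem _ hmem0)
          · have e : n - (m+1) + (q+1+1) + 1 = n - m + q + 2 := by omega
            rw [e]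
            have hmem1 : l.getD q w ∈ S.erase w := by
              have := hgetR q (by omega)
              rw [hR] at this
              exact Finset.mem_of_mem_erase this
            have hmem2 : l.getD (q+1) w ∈ S.erase w := by
              have := hgetR (q+1) (by omega)
              rw [hR] at this
              exact Finset.mem_of_mem_erase this
            exact le_of_eq (hD (n - m + q + 2) (by omega) (by omega) _ hmem1 _ hmem2)
        · refine ⟨0, by omega, ?_⟩
          have e : n - (m+1) + 0 + 1 = n - m := by omega
          rw [e]
          exact hlt
    · push_neg at hA
      obtain ⟨k, hk1, hk2, u, hu, v, hv, huv⟩ := hdiff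
      have hkne : k ≠ n - m := by
        intro e
        exact huv (by rw [e]; exact hA u hu v hv)
      have hk1' : n - m + 1 ≤ k := by omega
      have huvne : u ≠ v := fun e => huv (by rw [e])
      have hm2' : 2 ≤ m := by omega
      have hvu : v ∈ S.erase u := Finset.mem_erase.2 ⟨huvne.symm, hv⟩
      have hcard2 : ((S.erase u).erase v).card = m - 1 := by
        rw [Finset.card_erase_of_mem hvu, Finset.card_erase_of_mem hu, hcard]
        omega
      have hne2 : ((S.erase u).erase v).Nonempty := Finset.card_pos.1 (by omega)
      obtain ⟨j, hj⟩ := hne2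
      have hjv : j ≠ v := Finset.ne_of_mem_erase hj
      have hju : j ≠ u := Finset.ne_of_mem_erase (Finset.mem_of_mem_erase hj)
      have hjS : j ∈ S := Finset.mem_of_mem_erase (Finset.mem_of_mem_erase hj)
      obtain ⟨f', hmem', hinj', hchain', hstrict'⟩ :=
        ih hm2' (S.erase j) (by rw [Finset.card_erase_of_mem hjS, hcard]; omega)
          ⟨k, hk1', hk2, u, Finset.mem_erase.2 ⟨fun e => hju e.symm, hu⟩,
            v, Finset.mem_erase.2 ⟨fun e => hjv e.symm, hv⟩, huv⟩
      exact consStep G j hjS hmn f' hmem' hinj' hchain' hstrict'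
        (le_of_eq (hA j hjS _ (Finset.mem_of_mem_erase (hmem' 0 (by omega)))))

end Comb

end SPAux

open SPAux

theorem stmt1 (n : ℕ) (hn : 1 ≤ n) (F : Fin n → ℝ → ℝ)
    (hcont : ∀ i, ContinuousOn (F i) (Icc 0 1))
    (hmono : ∀ i, StrictMonoOn (F i) (Icc 0 1))
    (h0 : ∀ i, F i 0 = 0) (h1 : ∀ i, F i 1 = 1)
    (hdiff : ∃ i j : Fin n, i ≠ j ∧ ∃ t : ℕ, 0 < t ∧ t < n ∧
      ∃ zi ∈ Icc (0:ℝ) 1, ∃ zj ∈ Icc (0:ℝ) 1,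
        F i zi = (t : ℝ) / (n : ℝ) ∧ F j zj = (t : ℝ) / (n : ℝ) ∧ zi ≠ zj) :
    ∃ x : Fin (n+1) → ℝ, Monotone x ∧ x 0 = 0 ∧ x (Fin.last n) = 1 ∧
      ∃ σ : Equiv.Perm (Fin n), ∀ k : Fin n,
        1 / (n : ℝ) < F (σ k) (x k.succ) - F (σ k) (x k.castSucc) := by
  classical
  obtain ⟨i, j, hij, t, ht0, htn, zi, hzimem, zj, hzjmem, hFzi, hFzj, hzizj⟩ := hdiff
  have hn2 : 2 ≤ n := by
    have h1 := i.isLt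
    have h2 := j.isLt
    have h3 : i.val ≠ j.val := fun e => hij (Fin.ext e)
    omega
  have hnR : (0:ℝ) < n := by
    have : (0:ℕ) < n := by omega
    exact_mod_cast this
  -- construct the mark function
  have hex : ∀ (i : Fin n) (r : ℝ), ∃ z, r ∈ Icc (0:ℝ) 1 → z ∈ Icc (0:ℝ) 1 ∧ F i z = r := by
    intro i r
    by_cases hr : r ∈ Icc (0:ℝ) 1
    · have hmem : r ∈ Icc (F i 0) (F i 1) := by rw [h0, h1]; exact hr
      have := intermediate_value_Icc (zero_le_one) (hcont i) hmem
      obtain ⟨z, hz, hfz⟩ := this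
      exact ⟨z, fun _ => ⟨hz, hfz⟩⟩
    · exact ⟨0, fun hc => absurd hc hr⟩
  choose M hM using hex
  have h : SPAux.Hyp n F M :=
    ⟨h0, h1, hmono, fun i r hr => (hM i r hr).1, fun i r hr => (hM i r hr).2⟩
  -- the t/n level
  have htmem : ((t:ℕ):ℝ)/n ∈ Icc (0:ℝ) 1 := by
    constructor
    · positivity
    · rw [div_le_one hnR]
      exact_mod_cast le_of_lt htn
  have hzi' : M i (((t:ℕ):ℝ)/n) = zi := by
    refine (hmono i).injOn (h.mark_mem i _ htmem) hzimem ?_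
    rw [h.f_mark i _ htmem, hFzi]
  have hzj' : M j (((t:ℕ):ℝ)/n) = zj := by
    refine (hmono j).injOn (h.mark_mem j _ htmem) hzjmem ?_
    rw [h.f_mark j _ htmem, hFzj]
  -- apply the combinatorial lemma
  obtain ⟨f, hfmem, hfinj, hfchain, hfstrict⟩ :=
    SPAux.claimB (fun u k => M u ((k:ℝ)/n)) n hn2 Finset.univ
      (by rw [Finset.card_univ, Fintype.card_fin])
      ⟨t, by omega, by omega, i, Finset.mem_univ i, j, Finset.mem_univ j, by
        show M i (((t:ℕ):ℝ)/n) ≠ M j (((t:ℕ):ℝ)/n)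
        rw [hzi', hzj']
        exact hzizj⟩
  have hchainN : ∀ p, p + 1 < n →
      M (f p) (((p+1:ℕ):ℝ)/n) ≤ M (f (p+1)) (((p+1:ℕ):ℝ)/n) := by
    intro p hp
    have := hfchain p hp
    have e : n - n + p + 1 = p + 1 := by omega
    rw [e] at this
    exact this
  obtain ⟨p₀, hp₀, hstrict⟩ := hfstrict
  have e0 : n - n + p₀ + 1 = p₀ + 1 := by omega
  rw [e0] at hstrict
  set K := p₀ + 1 with hK
  have hK1 : 1 ≤ K := by omega
  have hKn : K < n := by omega
  have hrK : ((K:ℕ):ℝ)/n ∈ Icc (0:ℝ) 1 := by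
    constructor
    · positivity
    · rw [div_le_one hnR]
      exact_mod_cast le_of_lt hKn
  have hstrict' : M (f (K-1)) (((K:ℕ):ℝ)/n) < M (f K) (((K:ℕ):ℝ)/n) := by
    have e : K - 1 = p₀ := by omega
    rw [e, hK]
    exact hstrict
  have hMa := h.mark_mem (f (K-1)) _ hrK
  have hMb := h.mark_mem (f K) _ hrK
  set y := (M (f (K-1)) (((K:ℕ):ℝ)/n) + M (f K) (((K:ℕ):ℝ)/n)) / 2 with hy
  have hya : M (f (K-1)) (((K:ℕ):ℝ)/n) < y := by rw [hy]; linarith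
  have hyb : y < M (f K) (((K:ℕ):ℝ)/n) := by rw [hy]; linarith
  have hymem : y ∈ Icc (0:ℝ) 1 := by
    constructor
    · linarith [hMa.1]
    · linarith [hMb.2]
  obtain ⟨xl, hxl0, hxlK, hxlmono, hxlmem, hxlpiece⟩ :=
    SPAux.leftBuild h K hK1 (le_of_lt hKn) f y hymem
      (h.gt_of_gt_mark _ hymem hrK hya)
      (fun p hp => hchainN p (by omega))
  obtain ⟨xr, hxr0, hxrEnd, hxrmono, hxrmem, hxrpiece⟩ :=
    SPAux.rightBuild h (n - K) (by omega) K (by omega) (fun q => f (K + q)) y hymem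
      (h.lt_of_lt_mark _ hymem hrK hyb)
      (fun p hp => hchainN (K + p) (by omega))
  refine ⟨fun k => if (k : ℕ) ≤ K then xl (k : ℕ) else xr ((k : ℕ) - K), ?_, ?_, ?_, ?_⟩
  · rw [Fin.monotone_iff_le_succ]
    intro k
    simp only [Fin.coe_castSucc, Fin.val_succ]
    rcases Nat.lt_or_ge (k : ℕ) K with hk | hk
    · rw [if_pos (by omega : (k:ℕ) ≤ K), if_pos (by omega : (k:ℕ) + 1 ≤ K)]
      exact hxlmono _ hk
    · rcases Nat.eq_or_lt_of_le hk with hk' | hk'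
      · rw [if_pos (by omega : (k:ℕ) ≤ K), if_neg (by omega : ¬ ((k:ℕ) + 1 ≤ K))]
        have e1 : (k:ℕ) = K := hk'.symm
        have e2 : (k:ℕ) + 1 - K = 1 := by omega
        rw [e2, e1, hxlK]
        calc y = xr 0 := hxr0.symm
        _ ≤ xr 1 := hxrmono 0 (by omega)
      · rw [if_neg (by omega : ¬ ((k:ℕ) ≤ K)), if_neg (by omega : ¬ ((k:ℕ) + 1 ≤ K))]
        have e2 : (k:ℕ) + 1 - K = ((k:ℕ) - K) + 1 := by omega
        rw [e2]
        exact hxrmono _ (by have := k.isLt; omega)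
  · simp only [Fin.val_zero]
    simp only [Nat.zero_le, ↓reduceIte]
    exact hxl0
  · simp only [Fin.val_last]
    rw [if_neg (by omega : ¬ (n ≤ K))]
    exact hxrEnd
  · refine ⟨Equiv.ofBijective (fun k : Fin n => f (k : ℕ))
      ((Fintype.bijective_iff_injective_and_card _).2
        ⟨fun a b hab => Fin.ext (hfinj _ _ a.isLt b.isLt hab), rfl⟩), ?_⟩
    intro k
    have hσ : (Equiv.ofBijective (fun k : Fin n => f (k : ℕ))
      ((Fintype.bijective_iff_injective_and_card _).2
        ⟨fun a b hab => Fin.ext (hfinj _ _ a.isLt b.isLt hab), rfl⟩)) k = f (k : ℕ) := rfl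
    rw [hσ]
    have hsucc : ((k.succ : Fin (n+1)) : ℕ) = (k : ℕ) + 1 := rfl
    have hcast : ((k.castSucc : Fin (n+1)) : ℕ) = (k : ℕ) := rfl
    simp only [hsucc, hcast]
    rcases Nat.lt_or_ge (k : ℕ) K with hk | hk
    · rw [if_pos (by omega : (k:ℕ) + 1 ≤ K), if_pos (by omega : (k:ℕ) ≤ K)]
      exact hxlpiece _ hk
    · rw [if_neg (by omega : ¬ ((k:ℕ) + 1 ≤ K))]
      have hkq : (k:ℕ) + 1 - K = ((k:ℕ) - K) + 1 := by omega
      rw [hkq]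
      have hq : (k:ℕ) - K < n - K := by have := k.isLt; omega
      have hpiece := hxrpiece _ hq
      have ea : K + ((k:ℕ) - K) = (k:ℕ) := by omega
      rw [ea] at hpiece
      rcases Nat.eq_or_lt_of_le hk with hk' | hk'
      · rw [if_pos (by omega : (k:ℕ) ≤ K)]
        have e1 : (k:ℕ) = K := hk'.symm
        rw [e1, hxlK]
        rw [e1] at hpiece
        have e2 : K - K = 0 := by omega
        rw [e2] at hpiece
        rw [hxr0] at hpiece
        rw [e2]
        exact hpiece
      · rw [if_neg (by omega : ¬ ((k:ℕ) ≤ K))]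
        exact hpiece
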